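/- Let π^b be a baseline DTR. Define π↑ recursively by π↑_K(h⃗_K) ∈ argmax_{a ∈ {−1,+1}} Q^{π↑/π^b}_K(h⃗_K, a) and, for k = K−1,…,1, π↑_k(h⃗_k) ∈ argmax_{a ∈ {−1,+1}} Q^{π↑/π^b}_k(h⃗_k, a) (well-defined since Q^{π↑/π^b}_k depends on π↑ only through π↑_{(k+1):K}). Then for every stage k ∈ {1,…,K}, every history h⃗_k ∈ 𝓗_k, and every DTR π, V^{π↑/π^b}_k(h⃗_k) ≥ V^{π/π^b}_k(h⃗_k); that is, V^{π↑/π^b}_k(h⃗_k) = max over all DTRs π of V^{π/π^b}_k(h⃗_k). (Theorem 2: dynamic programming for the IV-improved DTR.) -/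

import Mathlib

open MeasureTheory

noncomputable section

open Classical in
/-- Real-valued indicator `1{p}` of a proposition. -/
noncomputable def ind (p : Prop) : ℝ := if p then 1 else 0

/-- Sign function: `+1` for positive, `−1` for negative, `0` at zero. -/
noncomputable def sgn (c : ℝ) : ℝ := if 0 < c then 1 else if c < 0 then -1 else 0

section DTR

/- Multi-stage setup: histories `H k` for stage indices `k = 0, …, K-1`
(stage `k+1` of the paper); `H K` is the terminal (post-trajectory) type.
New covariates arising after stage `k` live in `X (k+1)`, and
`concat k h a r x` is the concatenated history `(h⃗_k, a_k, r_k, x_{k+1})`.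
`P k h a` is the IV-constrained set of joint laws of `(R_k, X_{k+1})`.
At the last stage the new covariate is a null quantity that is simply ignored
(the terminal value function is identically `0`, so the stage-`K` formulas of the
paper are recovered). -/
variable (X : ℕ → Type) [∀ k, MeasurableSpace (X k)]
variable (H : ℕ → Type)
variable (concat : ∀ k, H k → ℝ → ℝ → X (k + 1) → H (k + 1))
variable (P : ∀ k, H k → ℝ → Set (Measure (ℝ × X (k + 1))))

open Classical in
/-- Relative value function of `π` with respect to the baseline `πb`, by backward induction
with `fuel` stages to go.  Writing `a'_k = π^b_k(h⃗_k)`: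
if `π_k(h⃗_k) = a'_k` it is `inf_{p ∈ 𝒫_{h⃗_k,a'_k}} ∫ V^{π/π^b}_{k+1}(h⃗_k,a'_k,r,x) dp`,
otherwise it is
`inf_{p ∈ 𝒫_{h⃗_k,−a'_k}} ∫ [r + V^{π/π^b}_{k+1}(h⃗_k,−a'_k,r,x)] dp − sup_{p' ∈ 𝒫_{h⃗_k,a'_k}} ∫ r dp'`. -/
noncomputable def rVal (πb π : ∀ k, H k → ℝ) : (fuel : ℕ) → (k : ℕ) → H k → ℝ
  | 0, _, _ => 0
  | fuel + 1, k, h =>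
      if π k h = πb k h then
        sInf ((fun p : Measure (ℝ × X (k + 1)) =>
            ∫ q, rVal πb π fuel (k + 1) (concat k h (πb k h) q.1 q.2) ∂p) '' P k h (πb k h))
      else
        sInf ((fun p : Measure (ℝ × X (k + 1)) =>
            ∫ q, (q.1 + rVal πb π fuel (k + 1) (concat k h (-(πb k h)) q.1 q.2)) ∂p)
            '' P k h (-(πb k h)))
          - sSup ((fun p : Measure (ℝ × X (k + 1)) => ∫ q, q.1 ∂p) '' P k h (πb k h))

/-- Relative value function `V^{π/π^b}_k` in a `K`-stage problem (stages `k = 0, …, K-1`). -/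
noncomputable def rV (K : ℕ) (πb π : ∀ k, H k → ℝ) (k : ℕ) (h : H k) : ℝ :=
  rVal X H concat P πb π (K - k) k h

open Classical in
/-- Relative `Q`-function `Q^{π/π^b}_k(h⃗_k, a)`. -/
noncomputable def rQ (K : ℕ) (πb π : ∀ k, H k → ℝ) (k : ℕ) (h : H k) (a : ℝ) : ℝ :=
  if a = πb k h then
    sInf ((fun p : Measure (ℝ × X (k + 1)) =>
        ∫ q, rV X H concat P K πb π (k + 1) (concat k h (πb k h) q.1 q.2) ∂p)
        '' P k h (πb k h))
  else
    sInf ((fun p : Measure (ℝ × X (k + 1)) =>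
        ∫ q, (q.1 + rV X H concat P K πb π (k + 1) (concat k h (-(πb k h)) q.1 q.2)) ∂p)
        '' P k h (-(πb k h)))
      - sSup ((fun p : Measure (ℝ × X (k + 1)) => ∫ q, q.1 ∂p) '' P k h (πb k h))

/-- Relative contrast `𝒞^{π/π^b}_k(h⃗_k)`
`= sup_{p'∈𝒫_{h⃗_k,a'_k}} ∫ r dp' + inf_{p∈𝒫_{h⃗_k,a'_k}} ∫ V^{π/π^b}_{k+1}(h⃗_k,a'_k,r,x) dp
   − inf_{p∈𝒫_{h⃗_k,−a'_k}} ∫ [r + V^{π/π^b}_{k+1}(h⃗_k,−a'_k,r,x)] dp`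
(at the final stage the middle term is `inf ∫ 0 dp = 0`, recovering the stage-`K` formula). -/
noncomputable def rC (K : ℕ) (πb π : ∀ k, H k → ℝ) (k : ℕ) (h : H k) : ℝ :=
  sSup ((fun p : Measure (ℝ × X (k + 1)) => ∫ q, q.1 ∂p) '' P k h (πb k h))
    + sInf ((fun p : Measure (ℝ × X (k + 1)) =>
        ∫ q, rV X H concat P K πb π (k + 1) (concat k h (πb k h) q.1 q.2) ∂p)
        '' P k h (πb k h))
    - sInf ((fun p : Measure (ℝ × X (k + 1)) =>
        ∫ q, (q.1 + rV X H concat P K πb π (k + 1) (concat k h (-(πb k h)) q.1 q.2)) ∂p)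
        '' P k h (-(πb k h)))

end DTR



lemma my_csInf_mono {A B : Set ℝ} (hA : BddBelow A) (hB : B.Nonempty)
    (h : ∀ b ∈ B, ∃ a ∈ A, a ≤ b) : sInf A ≤ sInf B :=
  le_csInf hB fun b hb => by
    obtain ⟨a, ha, hab⟩ := h b hb
    exact (csInf_le hA ha).trans hab

lemma rV_eq_rQ_self
    (X : ℕ → Type) [∀ k, MeasurableSpace (X k)] (H : ℕ → Type)
    (concat : ∀ k, H k → ℝ → ℝ → X (k + 1) → H (k + 1))
    (P : ∀ k, H k → ℝ → Set (Measure (ℝ × X (k + 1))))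
    (K : ℕ) (πb π : ∀ k, H k → ℝ) (k : ℕ) (hk : k < K) (h : H k) :
    rV X H concat P K πb π k h = rQ X H concat P K πb π k h (π k h) := by
  obtain ⟨f, hf⟩ : ∃ f, K - k = f + 1 := ⟨K - k - 1, by omega⟩
  have hf' : K - (k + 1) = f := by omega
  simp only [rV, rQ, hf, hf', rVal]

lemma rQ_mono
    (X : ℕ → Type) [∀ k, MeasurableSpace (X k)] (H : ℕ → Type)
    (concat : ∀ k, H k → ℝ → ℝ → X (k + 1) → H (k + 1))
    (P : ∀ k, H k → ℝ → Set (Measure (ℝ × X (k + 1))))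
    (K : ℕ)
    (hPne : ∀ k (h : H k) (a : ℝ), a = 1 ∨ a = -1 → (P k h a).Nonempty)
    (hIntR : ∀ k (h : H k) (a : ℝ), ∀ p ∈ P k h a,
      Integrable (fun q : ℝ × X (k + 1) => q.1) p)
    (hIntV : ∀ (πb π : ∀ k, H k → ℝ) k (h : H k) (a : ℝ), ∀ p ∈ P k h a,
      Integrable (fun q : ℝ × X (k + 1) =>
        rV X H concat P K πb π (k + 1) (concat k h a q.1 q.2)) p)
    (hBddB : ∀ (πb π : ∀ k, H k → ℝ) k (h : H k) (a : ℝ),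
      BddBelow ((fun p : Measure (ℝ × X (k + 1)) =>
          ∫ q, (q.1 + rV X H concat P K πb π (k + 1) (concat k h a q.1 q.2)) ∂p) '' P k h a)
      ∧ BddBelow ((fun p : Measure (ℝ × X (k + 1)) =>
          ∫ q, rV X H concat P K πb π (k + 1) (concat k h a q.1 q.2) ∂p) '' P k h a))
    (πb : ∀ k, H k → ℝ) (hπb : ∀ k (h : H k), πb k h = 1 ∨ πb k h = -1)
    (π π' : ∀ k, H k → ℝ) (k : ℕ) (h : H k) (a : ℝ)
    (hmono : ∀ h' : H (k + 1),
      rV X H concat P K πb π (k + 1) h' ≤ rV X H concat P K πb π' (k + 1) h') :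
    rQ X H concat P K πb π k h a ≤ rQ X H concat P K πb π' k h a := by
  have hb1 : πb k h = 1 ∨ πb k h = -1 := hπb k h
  have hbn : -(πb k h) = 1 ∨ -(πb k h) = -1 := by
    rcases hb1 with h1 | h1 <;> simp [h1]
  unfold rQ
  split
  · apply my_csInf_mono (hBddB πb π k h (πb k h)).2 ((hPne k h (πb k h) hb1).image _)
    rintro y ⟨p, hp, rfl⟩
    exact ⟨_, ⟨p, hp, rfl⟩,
      integral_mono (hIntV πb π k h (πb k h) p hp) (hIntV πb π' k h (πb k h) p hp)
        (fun q => hmono _)⟩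
  · apply sub_le_sub_right
    apply my_csInf_mono (hBddB πb π k h (-(πb k h))).1 ((hPne k h (-(πb k h)) hbn).image _)
    rintro y ⟨p, hp, rfl⟩
    exact ⟨_, ⟨p, hp, rfl⟩,
      integral_mono ((hIntR k h _ p hp).add (hIntV πb π k h _ p hp))
        ((hIntR k h _ p hp).add (hIntV πb π' k h _ p hp))
        (fun q => add_le_add_right (hmono _) _)⟩

/-- Theorem 2 (dynamic programming for the IV-improved DTR): if the DTR `π↑` is obtained by
backward induction, i.e. at every stage `k` and history `h⃗_k` the action `π↑_k(h⃗_k)`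
maximizes the relative `Q`-function `Q^{π↑/π^b}_k(h⃗_k, ·)` over `a ∈ {−1,+1}`, then `π↑`
maximizes the relative value function `V^{π/π^b}_k(h⃗_k)` at every stage `k` and every
history `h⃗_k`, over all (Boolean) DTRs `π`. -/
theorem dynamic_programming_IV_improved_DTR
    (X : ℕ → Type) [∀ k, MeasurableSpace (X k)] (H : ℕ → Type)
    (concat : ∀ k, H k → ℝ → ℝ → X (k + 1) → H (k + 1))
    (P : ∀ k, H k → ℝ → Set (Measure (ℝ × X (k + 1))))
    (K : ℕ) (hK : 1 ≤ K)
    (hPne : ∀ k (h : H k) (a : ℝ), a = 1 ∨ a = -1 → (P k h a).Nonempty)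
    (hPprob : ∀ k (h : H k) (a : ℝ), ∀ p ∈ P k h a, IsProbabilityMeasure p)
    (hIntR : ∀ k (h : H k) (a : ℝ), ∀ p ∈ P k h a,
      Integrable (fun q : ℝ × X (k + 1) => q.1) p)
    (hIntV : ∀ (πb π : ∀ k, H k → ℝ) k (h : H k) (a : ℝ), ∀ p ∈ P k h a,
      Integrable (fun q : ℝ × X (k + 1) =>
        rV X H concat P K πb π (k + 1) (concat k h a q.1 q.2)) p)
    (hBddB : ∀ (πb π : ∀ k, H k → ℝ) k (h : H k) (a : ℝ),
      BddBelow ((fun p : Measure (ℝ × X (k + 1)) =>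
          ∫ q, (q.1 + rV X H concat P K πb π (k + 1) (concat k h a q.1 q.2)) ∂p) '' P k h a)
      ∧ BddBelow ((fun p : Measure (ℝ × X (k + 1)) =>
          ∫ q, rV X H concat P K πb π (k + 1) (concat k h a q.1 q.2) ∂p) '' P k h a))
    (hBddA : ∀ k (h : H k) (a : ℝ),
      BddAbove ((fun p : Measure (ℝ × X (k + 1)) => ∫ q, q.1 ∂p) '' P k h a))
    (πb : ∀ k, H k → ℝ) (hπb : ∀ k (h : H k), πb k h = 1 ∨ πb k h = -1)
    (πup : ∀ k, H k → ℝ)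
    (hπup_pm : ∀ k (h : H k), πup k h = 1 ∨ πup k h = -1)
    (hπup_argmax : ∀ k, k < K → ∀ h : H k, ∀ a : ℝ, a = 1 ∨ a = -1 →
      rQ X H concat P K πb πup k h a ≤ rQ X H concat P K πb πup k h (πup k h)) :
    ∀ k, k < K → ∀ h : H k, ∀ π : ∀ j, H j → ℝ,
      (∀ j (hj : H j), π j hj = 1 ∨ π j hj = -1) →
      rV X H concat P K πb π k h ≤ rV X H concat P K πb πup k h := by
  suffices hS : ∀ n k, K - k = n + 1 → ∀ h : H k, ∀ π : ∀ j, H j → ℝ,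
      (∀ j (hj : H j), π j hj = 1 ∨ π j hj = -1) →
      rV X H concat P K πb π k h ≤ rV X H concat P K πb πup k h by
    intro k hk h π hπ
    exact hS (K - k - 1) k (by omega) h π hπ
  intro n
  induction n with
  | zero =>
    intro k hkK h π hπ
    have hk' : k < K := by omega
    have hmono : ∀ h' : H (k + 1),
        rV X H concat P K πb π (k + 1) h' ≤ rV X H concat P K πb πup (k + 1) h' := by
      intro h'
      have hK1 : K - (k + 1) = 0 := by omega
      simp [rV, hK1, rVal]
    calc rV X H concat P K πb π k h
        = rQ X H concat P K πb π k h (π k h) :=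
          rV_eq_rQ_self X H concat P K πb π k hk' h
      _ ≤ rQ X H concat P K πb πup k h (π k h) :=
          rQ_mono X H concat P K hPne hIntR hIntV hBddB πb hπb π πup k h (π k h) hmono
      _ ≤ rQ X H concat P K πb πup k h (πup k h) :=
          hπup_argmax k hk' h (π k h) (hπ k h)
      _ = rV X H concat P K πb πup k h :=
          (rV_eq_rQ_self X H concat P K πb πup k hk' h).symm
  | succ n ih =>
    intro k hkK h π hπ
    have hk' : k < K := by omega
    have hmono : ∀ h' : H (k + 1),
        rV X H concat P K πb π (k + 1) h' ≤ rV X H concat P K πb πup (k + 1) h' := by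
      intro h'
      exact ih (k + 1) (by omega) h' π hπ
    calc rV X H concat P K πb π k h
        = rQ X H concat P K πb π k h (π k h) :=
          rV_eq_rQ_self X H concat P K πb π k hk' h
      _ ≤ rQ X H concat P K πb πup k h (π k h) :=
          rQ_mono X H concat P K hPne hIntR hIntV hBddB πb hπb π πup k h (π k h) hmono
      _ ≤ rQ X H concat P K πb πup k h (πup k h) :=
          hπup_argmax k hk' h (π k h) (hπ k h)
      _ = rV X H concat P K πb πup k h :=
          (rV_eq_rQ_self X H concat P K πb πup k hk' h).symm


end
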